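/- For all ν ≥ 1/2 and all x > 0 the Turán type inequality I_{ν+1}²(x) − I_ν(x)·I_{ν+2}(x) < (2ν/x)·I_ν(x)·I_{ν+1}(x) holds. -/

import Mathlib

open Real Filter Topology

noncomputable def cf (ν : ℝ) (m : ℕ) : ℝ :=
  ((m.factorial : ℝ) * Real.Gamma ((m : ℝ) + ν + 1))⁻¹

noncomputable def FF (ν t : ℝ) : ℝ := ∑' m : ℕ, cf ν m * t ^ m

lemma cf_pos {ν : ℝ} (hν : -1 < ν) (m : ℕ) : 0 < cf ν m := by
  have h1 : (0:ℝ) < (m : ℝ) + ν + 1 := by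
    have : (0:ℝ) ≤ (m:ℝ) := Nat.cast_nonneg m
    linarith
  have := Real.Gamma_pos_of_pos h1
  have hm : (0:ℝ) < (m.factorial : ℝ) := by exact_mod_cast m.factorial_pos
  exact inv_pos.mpr (by positivity)

lemma cf_shift {ν : ℝ} (hν : -1 < ν) (m : ℕ) :
    cf ν m = ((m : ℝ) + ν + 1) * cf (ν + 1) m := by
  have h1 : (0:ℝ) < (m : ℝ) + ν + 1 := by
    have : (0:ℝ) ≤ (m:ℝ) := Nat.cast_nonneg m
    linarith
  have harg : (m : ℝ) + (ν + 1) + 1 = ((m : ℝ) + ν + 1) + 1 := by ring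
  have hG : Real.Gamma ((m : ℝ) + (ν + 1) + 1)
      = ((m : ℝ) + ν + 1) * Real.Gamma ((m : ℝ) + ν + 1) := by
    rw [harg, Real.Gamma_add_one h1.ne']
  have hGpos := Real.Gamma_pos_of_pos h1
  have hm : (0:ℝ) < (m.factorial : ℝ) := by exact_mod_cast m.factorial_pos
  rw [cf, cf, hG]
  field_simp

lemma cf_succ_mul {ν : ℝ} (hν : -1 < ν) (m : ℕ) :
    ((m : ℝ) + 1) * cf ν (m + 1) = cf (ν + 1) m := by
  have h1 : (0:ℝ) < (m : ℝ) + ν + 1 := by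
    have : (0:ℝ) ≤ (m:ℝ) := Nat.cast_nonneg m
    linarith
  have harg : ((m : ℕ) + 1 : ℕ) = (m + 1 : ℕ) := rfl
  have hG : Real.Gamma (((m + 1 : ℕ) : ℝ) + ν + 1)
      = ((m : ℝ) + ν + 1) * Real.Gamma ((m : ℝ) + ν + 1) := by
    have : ((m + 1 : ℕ) : ℝ) + ν + 1 = ((m : ℝ) + ν + 1) + 1 := by push_cast; ring
    rw [this, Real.Gamma_add_one h1.ne']
  have hG2 : Real.Gamma ((m : ℝ) + (ν + 1) + 1)
      = ((m : ℝ) + ν + 1) * Real.Gamma ((m : ℝ) + ν + 1) := by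
    have : (m : ℝ) + (ν + 1) + 1 = ((m : ℝ) + ν + 1) + 1 := by ring
    rw [this, Real.Gamma_add_one h1.ne']
  have hGpos := Real.Gamma_pos_of_pos h1
  have hm : (0:ℝ) < (m.factorial : ℝ) := by exact_mod_cast m.factorial_pos
  rw [cf, cf, hG, hG2, Nat.factorial_succ]
  push_cast
  field_simp

lemma summable_cf {ν : ℝ} (hν : -1 < ν) (t : ℝ) :
    Summable (fun m : ℕ => cf ν m * t ^ m) := by
  apply summable_of_ratio_norm_eventually_le (r := 1/2) (by norm_num)
  have hev : ∀ᶠ m : ℕ in atTop, 2 * |t| ≤ (m : ℝ) := by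
    obtain ⟨N, hN⟩ := exists_nat_ge (2 * |t|)
    exact eventually_atTop.2 ⟨N, fun m hm => hN.trans (by exact_mod_cast hm)⟩
  filter_upwards [hev, eventually_ge_atTop 1] with m hm hm1
  have h1 : (0:ℝ) < (m : ℝ) + ν + 1 := by
    have : (0:ℝ) ≤ (m:ℝ) := Nat.cast_nonneg m
    linarith
  have hcp := cf_pos hν m
  have hcp1 := cf_pos hν (m+1)
  -- cf ν (m+1) * ((m+1)*(m+ν+1)) = cf ν m
  have key : cf ν (m+1) * (((m:ℝ)+1) * ((m:ℝ)+ν+1)) = cf ν m := by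
    have h := cf_succ_mul hν m
    have h2 := cf_shift hν m
    rw [h2]
    nlinarith [h]
  rw [Real.norm_eq_abs, Real.norm_eq_abs, abs_mul, abs_mul, abs_pow, abs_pow,
    abs_of_pos hcp1, abs_of_pos hcp]
  have hm1' : (1:ℝ) ≤ (m:ℝ) := by exact_mod_cast hm1
  have hprod : 2 * |t| ≤ ((m:ℝ)+1) * ((m:ℝ)+ν+1) := by nlinarith
  have hpow : |t| ^ (m+1) = |t| ^ m * |t| := pow_succ _ _
  -- goal : cf ν (m+1) * |t|^(m+1) ≤ 1/2 * (cf ν m * |t|^m)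
  rw [hpow, ← key]
  have h0t : (0:ℝ) ≤ |t| := abs_nonneg t
  have hpownn : (0:ℝ) ≤ |t| ^ m := pow_nonneg h0t m
  nlinarith [mul_le_mul_of_nonneg_left hprod (mul_nonneg hcp1.le hpownn)]

lemma cf_step {ν : ℝ} (hν : -1 < ν) (t : ℝ) (k : ℕ) :
    cf ν (k + 1) * (((k + 1 : ℕ) : ℝ) * t ^ (k + 1 - 1)) = cf (ν + 1) k * t ^ k := by
  simp only [Nat.add_sub_cancel]
  push_cast
  rw [← cf_succ_mul hν k]
  ring

lemma summable_cf_deriv {ν : ℝ} (hν : -1 < ν) (t : ℝ) :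
    Summable (fun m : ℕ => cf ν m * ((m : ℝ) * t ^ (m - 1))) := by
  apply (_root_.summable_nat_add_iff 1).mp
  exact ((summable_cf (by linarith : (-1:ℝ) < ν + 1) t).congr
    (fun k => (cf_step hν t k).symm))

lemma tsum_deriv_eq {ν : ℝ} (hν : -1 < ν) (t : ℝ) :
    ∑' m : ℕ, cf ν m * ((m : ℝ) * t ^ (m - 1)) = FF (ν + 1) t := by
  rw [Summable.tsum_eq_zero_add (summable_cf_deriv hν t)]
  simp only [Nat.cast_zero, zero_mul, mul_zero, zero_add]
  exact tsum_congr (fun k => cf_step hν t k)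

lemma FF_pos {ν : ℝ} (hν : -1 < ν) {t : ℝ} (ht : 0 ≤ t) : 0 < FF ν t := by
  refine Summable.tsum_pos (summable_cf hν t) (fun m => ?_) 0 ?_
  · exact mul_nonneg (cf_pos hν m).le (pow_nonneg ht m)
  · simpa using cf_pos hν 0

lemma cf_step2 {ν : ℝ} (hν : -1 < ν) (t : ℝ) (k : ℕ) :
    (((k + 1 : ℕ) : ℝ) * cf ν (k + 1)) * t ^ (k + 1) = (cf (ν + 1) k * t ^ k) * t := by
  push_cast
  rw [cf_succ_mul hν k, pow_succ]
  ring

lemma summable_mul_cf {ν : ℝ} (hν : -1 < ν) (t : ℝ) :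
    Summable (fun m : ℕ => ((m : ℝ) * cf ν m) * t ^ m) := by
  apply (_root_.summable_nat_add_iff 1).mp
  exact (((summable_cf (by linarith : (-1:ℝ) < ν + 1) t).mul_right t).congr
    (fun k => (cf_step2 hν t k).symm))

lemma FF_rec {ν : ℝ} (hν : -1 < ν) (t : ℝ) :
    t * FF (ν + 1 + 1) t = FF ν t - (ν + 1) * FF (ν + 1) t := by
  have h1 : -1 < ν + 1 := by linarith
  have hs0 := summable_cf hν t
  have hs1 := summable_cf h1 t
  have hdiff : FF ν t - (ν + 1) * FF (ν + 1) t
      = ∑' m : ℕ, ((m : ℝ) * cf (ν + 1) m) * t ^ m := by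
    rw [FF, FF, ← tsum_mul_left, ← Summable.tsum_sub hs0 (hs1.mul_left _)]
    congr 1
    funext m
    rw [cf_shift hν m]; ring
  rw [hdiff, Summable.tsum_eq_zero_add (summable_mul_cf h1 t)]
  simp only [Nat.cast_zero, zero_mul, zero_add]
  rw [tsum_congr (fun k => cf_step2 h1 t k), tsum_mul_right, FF, mul_comm]

lemma hasDerivAt_FF {ν : ℝ} (hν : -1 < ν) (t : ℝ) :
    HasDerivAt (FF ν) (FF (ν + 1) t) t := by
  set R : ℝ := |t| + 1 with hR
  have hR0 : (0:ℝ) < R := by positivity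
  have ht_mem : t ∈ Metric.ball (0:ℝ) R := by
    simp [Real.dist_eq, hR]
  have h0_mem : (0:ℝ) ∈ Metric.ball (0:ℝ) R := by
    simp [Real.dist_eq]; positivity
  have main := hasDerivAt_tsum_of_isPreconnected
    (u := fun m : ℕ => cf ν m * ((m : ℝ) * R ^ (m - 1)))
    (g := fun (m : ℕ) (y : ℝ) => cf ν m * y ^ m)
    (g' := fun (m : ℕ) (y : ℝ) => cf ν m * ((m : ℝ) * y ^ (m - 1)))
    (summable_cf_deriv hν R) Metric.isOpen_ball (convex_ball (0:ℝ) R).isPreconnected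
    (fun m y _ => (hasDerivAt_pow m y).const_mul (cf ν m))
    (fun m y hy => ?_) h0_mem (summable_cf hν 0) ht_mem
  · rw [← tsum_deriv_eq hν t]
    exact main
  · have hy' : |y| ≤ R := by
      have := mem_ball_iff_norm.mp hy
      simp only [sub_zero, Real.norm_eq_abs] at this
      linarith
    have hcp := cf_pos hν m
    rw [Real.norm_eq_abs, abs_mul, abs_mul, abs_pow, abs_of_pos hcp,
      Nat.abs_cast]
    have h2 : |y| ^ (m - 1) ≤ R ^ (m - 1) := pow_le_pow_left₀ (abs_nonneg y) hy' _
    have hmn : (0:ℝ) ≤ (m:ℝ) := Nat.cast_nonneg m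
    exact mul_le_mul_of_nonneg_left (mul_le_mul_of_nonneg_left h2 hmn) hcp.le

lemma FF_zero (ν : ℝ) : FF ν 0 = cf ν 0 := by
  rw [FF, tsum_eq_single 0]
  · simp
  · intro m hm
    rcases Nat.exists_eq_succ_of_ne_zero hm with ⟨k, rfl⟩
    simp [pow_succ]

lemma key {ν : ℝ} (hν : 1/2 ≤ ν) : ∀ t : ℝ, 0 < t →
    t * FF (ν+1) t ^ 2 + FF ν t * FF (ν+1) t < FF ν t ^ 2 := by
  have hν0 : (-1:ℝ) < ν := by linarith
  have hν1 : (-1:ℝ) < ν + 1 := by linarith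
  have hν2 : (-1:ℝ) < ν + 1 + 1 := by linarith
  set φ : ℝ → ℝ := fun s => FF ν s ^ 2 - s * FF (ν+1) s ^ 2 - FF ν s * FF (ν+1) s
    with hφ_def
  have hd : ∀ s : ℝ, HasDerivAt φ
      (2 * FF ν s * FF (ν+1) s - 2 * FF (ν+1) s ^ 2
        - 2 * s * FF (ν+1) s * FF (ν+1+1) s - FF ν s * FF (ν+1+1) s) s := by
    intro s
    have hf := hasDerivAt_FF hν0 s
    have hg := hasDerivAt_FF hν1 s
    have h1 := hf.pow 2
    have h2 := (hasDerivAt_id s).mul (hg.pow 2)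
    have h3 := hf.mul hg
    refine HasDerivAt.congr_deriv ((h1.sub h2).sub h3) ?_
    push_cast
    simp only [id, Pi.pow_apply]
    ring
  have hcont : Continuous φ :=
    continuous_iff_continuousAt.mpr fun s => (hd s).differentiableAt.continuousAt
  intro t ht
  by_contra hcon
  push_neg at hcon
  have hφt : φ t ≤ 0 := by simp only [hφ_def]; linarith
  set S : Set ℝ := Set.Icc 0 t ∩ {s | φ s ≤ 0} with hS_def
  have hne : S.Nonempty := ⟨t, ⟨le_of_lt ht, le_refl t⟩, hφt⟩
  have hcl : IsClosed S := isClosed_Icc.inter (isClosed_le hcont continuous_const)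
  have hbdd : BddBelow S := ⟨0, fun s hs => hs.1.1⟩
  set t₀ : ℝ := sInf S with ht₀_def
  have ht₀S : t₀ ∈ S := hcl.csInf_mem hne hbdd
  have hφ0 : 0 < φ 0 := by
    have h1 := cf_pos hν0 0
    have h2 := cf_pos hν1 0
    have h3 := cf_shift hν0 0
    simp only [hφ_def, FF_zero, Nat.cast_zero, zero_add] at h3 ⊢
    nlinarith
  have ht₀pos : 0 < t₀ := by
    rcases lt_or_eq_of_le ht₀S.1.1 with h | h
    · exact h
    · exfalso
      have h2 : φ t₀ ≤ 0 := ht₀S.2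
      rw [← h] at h2
      linarith
  have hpos_lt : ∀ s, 0 ≤ s → s < t₀ → 0 < φ s := by
    intro s hs0 hst
    by_contra hle
    push_neg at hle
    have : s ∈ S := ⟨⟨hs0, le_trans hst.le ht₀S.1.2⟩, hle⟩
    exact absurd (csInf_le hbdd this) (not_le.mpr hst)
  have hφt₀ : φ t₀ = 0 := by
    refine le_antisymm ht₀S.2 ?_
    have htend : Filter.Tendsto φ (𝓝[<] t₀) (𝓝 (φ t₀)) :=
      (hcont.continuousAt).continuousWithinAt.tendsto
    refine ge_of_tendsto htend ?_
    filter_upwards [Ioo_mem_nhdsLT_of_mem (Set.mem_Ioc.mpr ⟨ht₀pos, le_refl t₀⟩)]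
      with s hs
    exact (hpos_lt s hs.1.le hs.2).le
  -- derivative at t₀ is ≤ 0 from the left
  have hslope := hasDerivAt_iff_tendsto_slope.mp (hd t₀)
  have hmono : 𝓝[<] t₀ ≤ 𝓝[≠] t₀ :=
    nhdsWithin_mono t₀ (fun s hs => ne_of_lt hs)
  have hD_le : (2 * FF ν t₀ * FF (ν+1) t₀ - 2 * FF (ν+1) t₀ ^ 2
        - 2 * t₀ * FF (ν+1) t₀ * FF (ν+1+1) t₀ - FF ν t₀ * FF (ν+1+1) t₀) ≤ 0 := by
    refine le_of_tendsto (hslope.mono_left hmono) ?_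
    filter_upwards [Ioo_mem_nhdsLT_of_mem (Set.mem_Ioc.mpr ⟨ht₀pos, le_refl t₀⟩)]
      with s hs
    rw [slope_def_field]
    apply div_nonpos_of_nonneg_of_nonpos
    · have := hpos_lt s hs.1.le hs.2
      linarith
    · linarith [hs.2]
  -- contradiction: the derivative at t₀ is positive
  have hf := FF_pos hν0 ht₀pos.le
  have hg := FF_pos hν1 ht₀pos.le
  have hh := FF_pos hν2 ht₀pos.le
  have hrec := FF_rec hν0 t₀
  have hphi : FF ν t₀ ^ 2 - t₀ * FF (ν+1) t₀ ^ 2 - FF ν t₀ * FF (ν+1) t₀ = 0 := hφt₀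
  have e1 : t₀ * (2 * FF ν t₀ * FF (ν+1) t₀ - 2 * FF (ν+1) t₀ ^ 2
        - 2 * t₀ * FF (ν+1) t₀ * FF (ν+1+1) t₀ - FF ν t₀ * FF (ν+1+1) t₀)
      = (2*ν-1) * (t₀ * FF (ν+1) t₀ ^ 2) + ν * (FF ν t₀ * FF (ν+1) t₀) := by
    linear_combination (-2*t₀*FF (ν+1) t₀ - FF ν t₀) * hrec - hphi
  nlinarith [mul_pos hf hg, mul_pos ht₀pos (pow_pos hg 2),
    mul_nonpos_of_nonneg_of_nonpos ht₀pos.le hD_le]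

/-- The modified Bessel function of the first kind of real order `ν`. -/
noncomputable def besselI (ν x : ℝ) : ℝ :=
  ∑' m : ℕ, (x / 2) ^ (2 * (m : ℝ) + ν) / ((m.factorial : ℝ) * Real.Gamma ((m : ℝ) + ν + 1))

/-- `Ψ_ν(x) = I_{ν+1}(x) / I_ν(x)`. -/
noncomputable def psi (ν x : ℝ) : ℝ := besselI (ν + 1) x / besselI ν x

lemma besselI_eq {ν x : ℝ} (hx : 0 < x) :
    besselI ν x = (x/2) ^ ν * FF ν ((x/2)^2) := by
  rw [besselI, FF, ← tsum_mul_left]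
  congr 1
  funext m
  have hu : 0 < x/2 := by linarith
  have h2m : (x/2) ^ (2*(m:ℝ)) = ((x/2)^2)^m := by
    rw [show (2*(m:ℝ)) = ((2*m : ℕ) : ℝ) by push_cast; ring, Real.rpow_natCast, pow_mul]
  rw [div_eq_mul_inv, ← cf, Real.rpow_add hu, h2m]
  ring

theorem stmt_15 (ν x : ℝ) (hν : 1 / 2 ≤ ν) (hx : 0 < x) :
    (besselI (ν + 1) x) ^ 2 - besselI ν x * besselI (ν + 2) x <
      (2 * ν / x) * besselI ν x * besselI (ν + 1) x := by
  have hν0 : (-1:ℝ) < ν := by linarith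
  have hν1 : (-1:ℝ) < ν + 1 := by linarith
  have hu : 0 < x/2 := by linarith
  have hApos : 0 < (x/2) ^ ν := Real.rpow_pos_of_pos hu ν
  have hkey := key hν ((x/2)^2) (by positivity)
  have hrec := FF_rec hν0 ((x/2)^2)
  rw [show ν + 1 + 1 = ν + 2 by ring] at hrec
  have hA1 : (x/2) ^ (ν+1) = (x/2) ^ ν * (x/2) := by
    rw [Real.rpow_add hu, Real.rpow_one]
  have hA2 : (x/2) ^ (ν+2) = (x/2) ^ ν * (x/2)^2 := by
    rw [Real.rpow_add hu, show ((2:ℝ)) = ((2:ℕ):ℝ) by norm_num, Real.rpow_natCast]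
  have main : ((x/2)^2) * FF (ν+1) ((x/2)^2) ^ 2
      - ((x/2)^2) * (FF ν ((x/2)^2) * FF (ν+2) ((x/2)^2))
      < ν * (FF ν ((x/2)^2) * FF (ν+1) ((x/2)^2)) := by
    have h3 : ((x/2)^2) * (FF ν ((x/2)^2) * FF (ν+2) ((x/2)^2))
        = FF ν ((x/2)^2) ^ 2 - (ν+1) * (FF ν ((x/2)^2) * FF (ν+1) ((x/2)^2)) := by
      linear_combination FF ν ((x/2)^2) * hrec
    linarith
  rw [besselI_eq hx, besselI_eq hx, besselI_eq hx]
  have hEq1 : ((x/2)^(ν+1) * FF (ν+1) ((x/2)^2)) ^ 2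
      - ((x/2)^ν * FF ν ((x/2)^2)) * ((x/2)^(ν+2) * FF (ν+2) ((x/2)^2))
      = ((x/2)^ν)^2 * (((x/2)^2) * FF (ν+1) ((x/2)^2) ^ 2
          - ((x/2)^2) * (FF ν ((x/2)^2) * FF (ν+2) ((x/2)^2))) := by
    rw [hA1, hA2]; ring
  have hEq2 : 2*ν/x * ((x/2)^ν * FF ν ((x/2)^2)) * ((x/2)^(ν+1) * FF (ν+1) ((x/2)^2))
      = ((x/2)^ν)^2 * (ν * (FF ν ((x/2)^2) * FF (ν+1) ((x/2)^2))) := by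
    rw [hA1]
    field_simp
  rw [hEq1, hEq2]
  exact mul_lt_mul_of_pos_left main (by positivity)
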